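/- Let L_1, ..., L_n > 0 with ∑ e^{-L_i} = 1 and suppose all ratios L_i/L_j are rational, so L_i = m_i d for a common d > 0 and positive integers m_i. Then the sequence a_k = Q̃'(k d) (where Q̃'(x) = Q̃(x) + 1/(n-1)) satisfies, for kd ≥ max_i L_i, the linear recurrence a_k = a_{k - m_1} + ... + a_{k - m_n}, whose characteristic polynomial z^{M} - ∑_i z^{M - m_i} (M = max m_i) has e^{d} as a root. -/

import Mathlib

open Finset

noncomputable def Qt {n : ℕ} (L : Fin n → ℝ) (x : ℝ) : ℝ :=
  ∑' k : Fin n → ℕ, if ∑ i, L i * k i ≤ x then (Nat.multinomial Finset.univ k : ℝ) else 0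

noncomputable def Qt' {n : ℕ} (L : Fin n → ℝ) (x : ℝ) : ℝ :=
  Qt L x + 1 / ((n : ℝ) - 1)


lemma mstep {n : ℕ} (k : Fin n → ℕ) (i : Fin n) (hki : k i ≠ 0) :
    (∑ j, k j) * Nat.multinomial Finset.univ (Function.update k i (k i - 1)) =
      k i * Nat.multinomial Finset.univ k := by
  set k' := Function.update k i (k i - 1) with hk'
  have hC : 0 < ∏ j, Nat.factorial (k' j) := Finset.prod_pos fun j _ => Nat.factorial_pos _
  apply Nat.eq_of_mul_eq_mul_right hC
  have hsum : ∑ j, k j = (∑ j, k' j) + 1 := by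
    rw [← Finset.add_sum_erase _ k (mem_univ i), ← Finset.add_sum_erase _ k' (mem_univ i)]
    have : ∑ j ∈ univ.erase i, k' j = ∑ j ∈ univ.erase i, k j :=
      Finset.sum_congr rfl fun j hj => by
        simp [hk', Function.update_of_ne (Finset.ne_of_mem_erase hj)]
    rw [this]
    have : k' i = k i - 1 := by simp [hk']
    omega
  have hprod : k i * ∏ j, Nat.factorial (k' j) = ∏ j, Nat.factorial (k j) := by
    rw [← Finset.mul_prod_erase _ _ (mem_univ i), ← Finset.mul_prod_erase _ (fun j => Nat.factorial (k j)) (mem_univ i)]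
    have he : ∏ j ∈ univ.erase i, Nat.factorial (k' j) = ∏ j ∈ univ.erase i, Nat.factorial (k j) :=
      Finset.prod_congr rfl fun j hj => by
        simp [hk', Function.update_of_ne (Finset.ne_of_mem_erase hj)]
    rw [he, ← mul_assoc]
    congr 1
    have : k' i = k i - 1 := by simp [hk']
    rw [this, ← Nat.succ_pred_eq_of_pos (Nat.pos_of_ne_zero hki)]
    simp [Nat.factorial_succ]
  have spec1 := Nat.multinomial_spec Finset.univ k'
  have spec2 := Nat.multinomial_spec Finset.univ k
  calc (∑ j, k j) * Nat.multinomial Finset.univ k' * ∏ j, Nat.factorial (k' j)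
      = (∑ j, k j) * ((∏ j, Nat.factorial (k' j)) * Nat.multinomial Finset.univ k') := by ring
    _ = (∑ j, k j) * Nat.factorial (∑ j, k' j) := by rw [spec1]
    _ = ((∑ j, k' j) + 1) * Nat.factorial (∑ j, k' j) := by rw [hsum]
    _ = Nat.factorial (∑ j, k j) := by rw [← Nat.factorial_succ, ← hsum]
    _ = (∏ j, Nat.factorial (k j)) * Nat.multinomial Finset.univ k := spec2.symm
    _ = (k i * ∏ j, Nat.factorial (k' j)) * Nat.multinomial Finset.univ k := by rw [hprod]
    _ = k i * Nat.multinomial Finset.univ k * ∏ j, Nat.factorial (k' j) := by ring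

lemma mrec {n : ℕ} (k : Fin n → ℕ) (hk : k ≠ 0) :
    Nat.multinomial Finset.univ k =
      ∑ i ∈ Finset.univ.filter (fun i => k i ≠ 0),
        Nat.multinomial Finset.univ (Function.update k i (k i - 1)) := by
  have hs : 0 < ∑ j, k j := by
    obtain ⟨i, hi⟩ := Function.ne_iff.mp hk
    exact Finset.sum_pos' (fun j _ => Nat.zero_le _) ⟨i, mem_univ i, Nat.pos_of_ne_zero hi⟩
  apply Nat.eq_of_mul_eq_mul_left hs
  rw [Finset.mul_sum]
  have : ∀ i ∈ Finset.univ.filter (fun i => k i ≠ 0),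
      (∑ j, k j) * Nat.multinomial Finset.univ (Function.update k i (k i - 1)) =
        k i * Nat.multinomial Finset.univ k := fun i hi =>
    mstep k i (Finset.mem_filter.mp hi).2
  rw [Finset.sum_congr rfl this, ← Finset.sum_mul, Finset.sum_filter_ne_zero]

-- helper: sum with update
lemma sum_mul_update {n : ℕ} (L : Fin n → ℝ) (k : Fin n → ℕ) (i : Fin n) (c : ℕ) :
    ∑ j, L j * ((Function.update k i c j : ℕ) : ℝ)
      = (∑ j, L j * (k j : ℝ)) - L i * (k i : ℝ) + L i * c := by
  rw [← Finset.add_sum_erase _ (fun j => L j * ((Function.update k i c j : ℕ) : ℝ)) (mem_univ i),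
      ← Finset.add_sum_erase _ (fun j => L j * (k j : ℝ)) (mem_univ i)]
  have he : ∑ j ∈ univ.erase i, L j * ((Function.update k i c j : ℕ) : ℝ)
      = ∑ j ∈ univ.erase i, L j * (k j : ℝ) :=
    Finset.sum_congr rfl fun j hj => by
      rw [Function.update_of_ne (Finset.ne_of_mem_erase hj)]
  rw [he]
  simp [Function.update_self]
  ring

lemma feq {n : ℕ} (hn : 1 < n) (L : Fin n → ℝ) (hL : ∀ i, 0 < L i) (x : ℝ) (hx : 0 ≤ x) :
    Qt L x = 1 + ∑ i, Qt L (x - L i) := by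
  have hne : Nonempty (Fin n) := ⟨⟨0, by omega⟩⟩
  set δ : ℝ := Finset.univ.inf' Finset.univ_nonempty L with hδdef
  have hδpos : 0 < δ := by
    rw [hδdef, Finset.lt_inf'_iff]
    exact fun i _ => hL i
  have hδle : ∀ i, δ ≤ L i := fun i => Finset.inf'_le _ (mem_univ i)
  set N : ℕ := ⌊x / δ⌋₊ with hN
  set S : Finset (Fin n → ℕ) := Fintype.piFinset fun _ => Finset.range (N + 1) with hS
  -- support bound
  have hsupp : ∀ (k : Fin n → ℕ), (∑ j, L j * (k j : ℝ)) ≤ x → k ∈ S := by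
    intro k hk
    rw [hS, Fintype.mem_piFinset]
    intro j
    rw [Finset.mem_range, Nat.lt_succ_iff, hN]
    apply Nat.le_floor
    rw [le_div_iff₀ hδpos]
    calc (k j : ℝ) * δ ≤ L j * k j := by
          rw [mul_comm]; exact mul_le_mul_of_nonneg_right (hδle j) (Nat.cast_nonneg _)
      _ ≤ ∑ j', L j' * (k j' : ℝ) := Finset.single_le_sum
          (fun j' _ => mul_nonneg (hL j').le (Nat.cast_nonneg _)) (mem_univ j)
      _ ≤ x := hk
  -- Qt as finite sums
  have hQt : ∀ y : ℝ, y ≤ x → Qt L y = ∑ k ∈ S,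
      (if ∑ j, L j * (k j : ℝ) ≤ y then (Nat.multinomial Finset.univ k : ℝ) else 0) := by
    intro y hy
    apply tsum_eq_sum
    intro k hk
    rw [if_neg]
    intro h
    exact hk (hsupp k (h.trans hy))
  have h0S : (0 : Fin n → ℕ) ∈ S := by
    rw [hS, Fintype.mem_piFinset]; intro j; simp
  have hB : ∀ i : Fin n,
      (∑ k ∈ S, (if k i ≠ 0 ∧ ∑ j, L j * (k j : ℝ) ≤ x then
          (Nat.multinomial Finset.univ (Function.update k i (k i - 1)) : ℝ) else 0))
        = Qt L (x - L i) := by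
    intro i
    rw [hQt (x - L i) (by linarith [hL i]), ← Finset.sum_filter, ← Finset.sum_filter]
    refine Finset.sum_bij' (fun k _ => Function.update k i (k i - 1))
      (fun k _ => Function.update k i (k i + 1)) ?_ ?_ ?_ ?_ ?_
    · -- hi : maps into target
      intro k hk
      rw [Finset.mem_filter] at hk ⊢
      obtain ⟨hkS, hki, hkx⟩ := hk
      constructor
      · rw [hS, Fintype.mem_piFinset] at hkS
        rw [hS, Fintype.mem_piFinset]
        intro j
        by_cases hji : j = i
        · subst hji; rw [Function.update_self]
          exact Finset.mem_range.mpr (lt_of_le_of_lt (Nat.sub_le _ _) (Finset.mem_range.mp (hkS j)))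
        · rw [Function.update_of_ne hji]; exact hkS j
      · rw [sum_mul_update]
        have : ((k i - 1 : ℕ) : ℝ) = (k i : ℝ) - 1 := by
          rw [Nat.cast_sub (Nat.one_le_iff_ne_zero.mpr hki)]; simp
        rw [this]
        have := hL i
        nlinarith
    · -- hj : inverse maps into source
      intro k hk
      rw [Finset.mem_filter] at hk ⊢
      obtain ⟨hkS, hkx⟩ := hk
      have hsum' : ∑ j, L j * ((Function.update k i (k i + 1) j : ℕ) : ℝ)
          = (∑ j, L j * (k j : ℝ)) + L i := by
        rw [sum_mul_update]; push_cast; ring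
      refine ⟨?_, ?_, by rw [hsum']; linarith⟩
      · rw [hS, Fintype.mem_piFinset] at hkS
        rw [hS, Fintype.mem_piFinset]
        intro j
        by_cases hji : j = i
        · subst hji; rw [Function.update_self, Finset.mem_range, Nat.lt_succ_iff, hN]
          apply Nat.le_floor
          rw [le_div_iff₀ hδpos]
          have h1 : ((k j + 1 : ℕ) : ℝ) * δ ≤ L j * ((k j + 1 : ℕ) : ℝ) := by
            rw [mul_comm]
            exact mul_le_mul_of_nonneg_right (hδle j) (Nat.cast_nonneg _)
          have h3 : L j * (k j : ℝ) ≤ ∑ j', L j' * (k j' : ℝ) :=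
            Finset.single_le_sum (fun j' _ => mul_nonneg (hL j').le (Nat.cast_nonneg _))
              (mem_univ j)
          have h2 : L j * ((k j + 1 : ℕ) : ℝ)
              ≤ ∑ j', L j' * (k j' : ℝ) + L j := by push_cast; nlinarith [h3]
          linarith
        · rw [Function.update_of_ne hji]; exact hkS j
      · simp
    · -- left inverse
      intro k hk
      rw [Finset.mem_filter] at hk
      rw [Function.update_self, Function.update_idem,
        Nat.sub_add_cancel (Nat.one_le_iff_ne_zero.mpr hk.2.1), Function.update_eq_self]
    · -- right inverse
      intro k hk
      rw [Function.update_self, Function.update_idem]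
      simp [Function.update_eq_self]
    · intro k hk; rfl
  rw [hQt x le_rfl, ← Finset.add_sum_erase _ _ h0S]
  have hterm0 : (if ∑ j, L j * (((0 : Fin n → ℕ) j : ℕ) : ℝ) ≤ x then
      (Nat.multinomial Finset.univ (0 : Fin n → ℕ) : ℝ) else 0) = 1 := by
    rw [if_pos (by simpa using hx)]
    norm_num [Nat.multinomial]
  rw [hterm0]
  congr 1
  have hA : ∀ k ∈ S.erase 0,
      (if ∑ j, L j * (k j : ℝ) ≤ x then (Nat.multinomial Finset.univ k : ℝ) else 0)
        = ∑ i, (if k i ≠ 0 ∧ ∑ j, L j * (k j : ℝ) ≤ x then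
            (Nat.multinomial Finset.univ (Function.update k i (k i - 1)) : ℝ) else 0) := by
    intro k hk
    have hknz : k ≠ 0 := (Finset.mem_erase.mp hk).1
    by_cases hcond : ∑ j, L j * (k j : ℝ) ≤ x
    · rw [if_pos hcond, mrec k hknz]
      push_cast
      rw [Finset.sum_filter]
      exact Finset.sum_congr rfl fun i _ => by simp [hcond]
    · rw [if_neg hcond]
      symm
      exact Finset.sum_eq_zero fun i _ => by simp [hcond]
  rw [Finset.sum_congr rfl hA, Finset.sum_comm]
  refine Finset.sum_congr rfl fun i _ => ?_
  rw [← hB i]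
  rw [← Finset.add_sum_erase _ _ h0S]
  simp

theorem stmt13 (n : ℕ) (hn : 1 < n) (L : Fin n → ℝ) (hL : ∀ i, 0 < L i)
    (hnorm : ∑ i, Real.exp (-L i) = 1)
    (d : ℝ) (hd : 0 < d) (m : Fin n → ℕ) (hm : ∀ i, 0 < m i)
    (hcomm : ∀ i, L i = m i * d)
    (a : ℕ → ℝ) (ha : ∀ k : ℕ, a k = Qt' L (k * d))
    (M : ℕ) (hM : M = Finset.univ.sup m) :
    (∀ k : ℕ, (∀ i, (m i : ℝ) * d ≤ k * d) → a k = ∑ i, a (k - m i)) ∧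
      Real.exp d ^ M = ∑ i, Real.exp d ^ (M - m i) := by
  have hn1 : ((n : ℝ) - 1) ≠ 0 := by
    have : (2 : ℝ) ≤ n := by exact_mod_cast hn
    linarith
  constructor
  · intro k hk
    have hmi : ∀ i, m i ≤ k := by
      intro i
      have := hk i
      have : (m i : ℝ) ≤ k := le_of_mul_le_mul_right (by linarith [hk i]) hd
      exact_mod_cast this
    have hx : (0 : ℝ) ≤ k * d := mul_nonneg (Nat.cast_nonneg _) hd.le
    have key := feq hn L hL (k * d) hx
    rw [ha k]
    have hsub : ∀ i, ((k - m i : ℕ) : ℝ) * d = k * d - L i := by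
      intro i
      rw [Nat.cast_sub (hmi i), hcomm i]
      ring
    have : ∑ i, a (k - m i) = ∑ i, Qt' L (k * d - L i) := by
      refine Finset.sum_congr rfl fun i _ => ?_
      rw [ha (k - m i), hsub i]
    rw [this]
    unfold Qt'
    rw [Finset.sum_add_distrib, Finset.sum_const, Finset.card_univ, Fintype.card_fin]
    rw [key]
    rw [nsmul_eq_mul]
    field_simp
    ring
  · have hmle : ∀ i, m i ≤ M := fun i => hM ▸ Finset.le_sup (Finset.mem_univ i)
    have h1 : ∑ i, Real.exp (-(m i * d)) = 1 := by
      rw [← hnorm]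
      exact Finset.sum_congr rfl fun i _ => by rw [hcomm i]
    have hexp : ∀ i, Real.exp d ^ (M - m i) = Real.exp d ^ M * Real.exp (-(m i * d)) := by
      intro i
      rw [← Real.exp_nat_mul, ← Real.exp_nat_mul, ← Real.exp_add]
      congr 1
      rw [Nat.cast_sub (hmle i)]
      ring
    rw [Finset.sum_congr rfl fun i _ => hexp i, ← Finset.mul_sum, h1, mul_one]
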